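/- Let Z be a locally finite set of points in the Poincaré disk D, and suppose the points of Z are not all collinear and no 'degenerate' configurations occur (no four points concircular). If z₁, z₂ ∈ Z are such that their Voronoi cells with respect to the Euclidean metric touch, and every empty disk witnessing this touching is contained in the closed unit disk, then their Voronoi cells with respect to the hyperbolic metric also touch. -/

import Mathlib

open scoped RealInnerProductSpace

noncomputable def distH (u v : EuclideanSpace ℝ (Fin 2)) : ℝ :=
  2 * Real.arsinh (‖u - v‖ / Real.sqrt ((1 - ‖u‖ ^ 2) * (1 - ‖v‖ ^ 2)))

/-- The Euclidean Voronoi cell of `z` with respect to the point set `Z`. -/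
noncomputable def cellE (Z : Set (EuclideanSpace ℝ (Fin 2)))
    (z : EuclideanSpace ℝ (Fin 2)) : Set (EuclideanSpace ℝ (Fin 2)) :=
  {u | dist u z = sInf ((fun z' => dist u z') '' Z)}

/-- The hyperbolic Voronoi cell of `z` with respect to the point set `Z ⊆ D`. -/
noncomputable def cellH (Z : Set (EuclideanSpace ℝ (Fin 2)))
    (z : EuclideanSpace ℝ (Fin 2)) : Set (EuclideanSpace ℝ (Fin 2)) :=
  {u | ‖u‖ < 1 ∧ distH u z = sInf ((fun z' => distH u z') '' Z)}

lemma distH_nonneg' (u v : EuclideanSpace ℝ (Fin 2)) : 0 ≤ distH u v := by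
  have h : (0:ℝ) ≤ ‖u - v‖ / Real.sqrt ((1 - ‖u‖ ^ 2) * (1 - ‖v‖ ^ 2)) :=
    div_nonneg (norm_nonneg _) (Real.sqrt_nonneg _)
  have h2 := Real.arsinh_le_arsinh.2 h
  rw [Real.arsinh_zero] at h2
  unfold distH; linarith

lemma mem_cellE_iff {Z : Set (EuclideanSpace ℝ (Fin 2))} {z u : EuclideanSpace ℝ (Fin 2)}
    (hz : z ∈ Z) : u ∈ cellE Z z ↔ ∀ z' ∈ Z, dist u z ≤ dist u z' := by
  have hbdd : BddBelow ((fun z' => dist u z') '' Z) :=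
    ⟨0, by rintro x ⟨z', _, rfl⟩; exact dist_nonneg⟩
  unfold cellE
  simp only [Set.mem_setOf_eq]
  constructor
  · intro h z' hz'
    exact h.trans_le (csInf_le hbdd ⟨z', hz', rfl⟩)
  · intro h
    exact le_antisymm
      (le_csInf ⟨_, ⟨z, hz, rfl⟩⟩ (by rintro b ⟨z', hz', rfl⟩; exact h z' hz'))
      (csInf_le hbdd ⟨z, hz, rfl⟩)

lemma mem_cellH_iff {Z : Set (EuclideanSpace ℝ (Fin 2))} {z u : EuclideanSpace ℝ (Fin 2)}
    (hz : z ∈ Z) : u ∈ cellH Z z ↔ ‖u‖ < 1 ∧ ∀ z' ∈ Z, distH u z ≤ distH u z' := by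
  have hbdd : BddBelow ((fun z' => distH u z') '' Z) :=
    ⟨0, by rintro x ⟨z', _, rfl⟩; exact distH_nonneg' u z'⟩
  unfold cellH
  simp only [Set.mem_setOf_eq]
  constructor
  · rintro ⟨h1, h2⟩
    exact ⟨h1, fun z' hz' => h2.trans_le (csInf_le hbdd ⟨z', hz', rfl⟩)⟩
  · rintro ⟨h1, h2⟩
    exact ⟨h1, le_antisymm
      (le_csInf ⟨_, ⟨z, hz, rfl⟩⟩ (by rintro b ⟨z', hz', rfl⟩; exact h2 z' hz'))
      (csInf_le hbdd ⟨z, hz, rfl⟩)⟩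

lemma dist_le_iff_lin (u z z' : EuclideanSpace ℝ (Fin 2)) :
    dist u z ≤ dist u z' ↔ ‖z‖ ^ 2 - 2 * ⟪u, z⟫ ≤ ‖z'‖ ^ 2 - 2 * ⟪u, z'⟫ := by
  rw [dist_eq_norm, dist_eq_norm]
  constructor
  · intro h
    have h2 : ‖u - z‖ ^ 2 ≤ ‖u - z'‖ ^ 2 := pow_le_pow_left₀ (norm_nonneg _) h 2
    rw [norm_sub_sq_real, norm_sub_sq_real] at h2
    linarith
  · intro h
    have h2 : ‖u - z‖ ^ 2 ≤ ‖u - z'‖ ^ 2 := by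
      rw [norm_sub_sq_real, norm_sub_sq_real]; linarith
    nlinarith [norm_nonneg (u - z), norm_nonneg (u - z')]

lemma dist_eq_iff_lin (u z z' : EuclideanSpace ℝ (Fin 2)) :
    dist u z = dist u z' ↔ ‖z‖ ^ 2 - 2 * ⟪u, z⟫ = ‖z'‖ ^ 2 - 2 * ⟪u, z'⟫ := by
  constructor
  · intro h
    have h1 := (dist_le_iff_lin u z z').1 h.le
    have h2 := (dist_le_iff_lin u z' z).1 h.ge
    linarith
  · intro h
    exact le_antisymm ((dist_le_iff_lin u z z').2 h.le) ((dist_le_iff_lin u z' z).2 h.ge)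
lemma ball_corr (c : EuclideanSpace ℝ (Fin 2)) (ρ : ℝ) (hρ : 0 < ρ) (hin : ‖c‖ + ρ < 1) :
    ∃ (p : EuclideanSpace ℝ (Fin 2)) (r : ℝ), ‖p‖ < 1 ∧ ∀ u : EuclideanSpace ℝ (Fin 2), ‖u‖ < 1 →
      ((distH p u ≤ r ↔ dist u c ≤ ρ) ∧ (r ≤ distH p u ↔ ρ ≤ dist u c)) := by
  have hc0 : 0 ≤ ‖c‖ := norm_nonneg c
  have hρ1 : ρ < 1 := by linarith
  obtain ⟨μ, hg, hμ1, hμc⟩ : ∃ μ : ℝ,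
      ‖c‖ ^ 2 * μ ^ 2 - (1 + ‖c‖ ^ 2 - ρ ^ 2) * μ + 1 = 0 ∧ 1 < μ ∧ μ * ‖c‖ < 1 := by
    by_cases hc : c = 0
    · have h1 : (0:ℝ) < 1 - ρ ^ 2 := by nlinarith
      refine ⟨1 / (1 - ρ ^ 2), ?_, ?_, ?_⟩
      · rw [hc]; simp only [norm_zero]; field_simp; ring
      · rw [lt_div_iff₀ h1]; nlinarith
      · rw [hc]; simp only [norm_zero, mul_zero]; norm_num
    · have hs0 : 0 < ‖c‖ := norm_pos_iff.2 hc
      set s := ‖c‖ with hs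
      set g : ℝ → ℝ := fun μ => s ^ 2 * μ ^ 2 - (1 + s ^ 2 - ρ ^ 2) * μ + 1 with hgdef
      have hg1 : g 1 = ρ ^ 2 := by simp only [hgdef]; ring
      have hgM : g (1 / s) < 0 := by
        have he : g (1 / s) = (ρ ^ 2 - (1 - s) ^ 2) / s := by
          simp only [hgdef]; field_simp; ring
        rw [he]
        apply div_neg_of_neg_of_pos _ hs0
        nlinarith
      have h1M : (1:ℝ) ≤ 1 / s := by rw [le_div_iff₀ hs0]; nlinarith
      have hcont : ContinuousOn g (Set.Icc 1 (1 / s)) := by fun_prop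
      obtain ⟨μ, hμmem, hμ0⟩ := intermediate_value_Icc' h1M hcont ⟨hgM.le, by rw [hg1]; positivity⟩
      refine ⟨μ, hμ0, ?_, ?_⟩
      · rcases eq_or_lt_of_le hμmem.1 with h | h
        · exfalso; rw [← h, hg1] at hμ0; nlinarith
        · exact h
      · rcases eq_or_lt_of_le hμmem.2 with h | h
        · exfalso; rw [h] at hμ0; rw [hμ0] at hgM; exact lt_irrefl 0 hgM
        · calc μ * s < (1 / s) * s := mul_lt_mul_of_pos_right h hs0
            _ = 1 := by field_simp
  have hμ0' : 0 < μ := by linarith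
  set p := μ • c with hp
  have hpn : ‖p‖ = μ * ‖c‖ := by
    rw [hp, norm_smul, Real.norm_eq_abs, abs_of_pos hμ0']
  have hp1 : ‖p‖ < 1 := by rw [hpn]; exact hμc
  have hden : 0 < 1 - ‖p‖ ^ 2 := by nlinarith [norm_nonneg p]
  set t := (μ - 1) / (1 - ‖p‖ ^ 2) with ht
  have ht0 : 0 ≤ t := le_of_lt (div_pos (by linarith) hden)
  refine ⟨p, 2 * Real.arsinh (Real.sqrt t), hp1, fun u hu => ?_⟩
  have hdu : 0 < 1 - ‖u‖ ^ 2 := by nlinarith [norm_nonneg u]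
  have hprod : 0 < (1 - ‖p‖ ^ 2) * (1 - ‖u‖ ^ 2) := mul_pos hden hdu
  set D := (1 - ‖p‖ ^ 2) * (1 - ‖u‖ ^ 2) with hD
  set X := ‖p - u‖ / Real.sqrt D with hX
  have hX0 : 0 ≤ X := div_nonneg (norm_nonneg _) (Real.sqrt_nonneg _)
  have hdH : distH p u = 2 * Real.arsinh X := rfl
  have hXsq : X ^ 2 * D = ‖p - u‖ ^ 2 := by
    rw [hX, div_pow, Real.sq_sqrt hprod.le]
    field_simp
  have htD : t * D = (μ - 1) * (1 - ‖u‖ ^ 2) := by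
    rw [ht, hD]
    field_simp
  have hiden : ‖p - u‖ ^ 2 - (μ - 1) * (1 - ‖u‖ ^ 2) = μ * (‖u - c‖ ^ 2 - ρ ^ 2) := by
    have h1 : ‖p - u‖ ^ 2 = ‖p‖ ^ 2 - 2 * ⟪p, u⟫ + ‖u‖ ^ 2 := norm_sub_sq_real p u
    have h2 : ‖u - c‖ ^ 2 = ‖u‖ ^ 2 - 2 * ⟪u, c⟫ + ‖c‖ ^ 2 := norm_sub_sq_real u c
    have h3 : ⟪p, u⟫ = μ * ⟪c, u⟫ := real_inner_smul_left c u μ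
    have h4 : ⟪u, c⟫ = ⟪c, u⟫ := real_inner_comm c u
    have h5 : ‖p‖ ^ 2 = μ ^ 2 * ‖c‖ ^ 2 := by rw [hpn]; ring
    rw [h1, h2, h3, h4, h5]
    linear_combination hg
  have hsq2 : Real.sqrt t ^ 2 = t := Real.sq_sqrt ht0
  constructor
  · rw [hdH]
    constructor
    · intro h
      have hXt : X ≤ Real.sqrt t := Real.arsinh_le_arsinh.1 (by linarith)
      have hX2 : X ^ 2 ≤ t := by
        have := pow_le_pow_left₀ hX0 hXt 2
        rw [hsq2] at this; exact this
      have h6 : ‖p - u‖ ^ 2 ≤ (μ - 1) * (1 - ‖u‖ ^ 2) := by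
        rw [← hXsq, ← htD]
        exact mul_le_mul_of_nonneg_right hX2 hprod.le
      have h8 : ‖u - c‖ ^ 2 - ρ ^ 2 ≤ 0 := by
        have h9 : μ * (‖u - c‖ ^ 2 - ρ ^ 2) ≤ μ * 0 := by rw [mul_zero]; linarith [hiden]
        exact le_of_mul_le_mul_left h9 hμ0'
      rw [dist_eq_norm]
      calc ‖u - c‖ = Real.sqrt (‖u - c‖ ^ 2) := (Real.sqrt_sq (norm_nonneg _)).symm
      _ ≤ Real.sqrt (ρ ^ 2) := Real.sqrt_le_sqrt (by linarith)
      _ = ρ := Real.sqrt_sq hρ.le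
    · intro h
      rw [dist_eq_norm] at h
      have h7 : ‖u - c‖ ^ 2 ≤ ρ ^ 2 := pow_le_pow_left₀ (norm_nonneg _) h 2
      have h6 : ‖p - u‖ ^ 2 ≤ t * D := by
        rw [htD]
        have h9 : μ * (‖u - c‖ ^ 2 - ρ ^ 2) ≤ 0 :=
          mul_nonpos_of_nonneg_of_nonpos hμ0'.le (by linarith)
        linarith [hiden]
      have hX2 : X ^ 2 ≤ t := by
        have h9 : X ^ 2 * D ≤ t * D := by rw [hXsq]; exact h6
        exact le_of_mul_le_mul_right h9 hprod
      have hXt : X ≤ Real.sqrt t := by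
        calc X = Real.sqrt (X ^ 2) := (Real.sqrt_sq hX0).symm
        _ ≤ Real.sqrt t := Real.sqrt_le_sqrt hX2
      have := Real.arsinh_le_arsinh.2 hXt
      linarith
  · rw [hdH]
    constructor
    · intro h
      have hXt : Real.sqrt t ≤ X := Real.arsinh_le_arsinh.1 (by linarith)
      have hX2 : t ≤ X ^ 2 := by
        have := pow_le_pow_left₀ (Real.sqrt_nonneg t) hXt 2
        rw [hsq2] at this; exact this
      have h6 : (μ - 1) * (1 - ‖u‖ ^ 2) ≤ ‖p - u‖ ^ 2 := by
        rw [← htD, ← hXsq]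
        exact mul_le_mul_of_nonneg_right hX2 hprod.le
      have h8 : 0 ≤ ‖u - c‖ ^ 2 - ρ ^ 2 := by
        have h9 : μ * 0 ≤ μ * (‖u - c‖ ^ 2 - ρ ^ 2) := by rw [mul_zero]; linarith [hiden]
        exact le_of_mul_le_mul_left h9 hμ0'
      rw [dist_eq_norm]
      calc ρ = Real.sqrt (ρ ^ 2) := (Real.sqrt_sq hρ.le).symm
      _ ≤ Real.sqrt (‖u - c‖ ^ 2) := Real.sqrt_le_sqrt (by linarith)
      _ = ‖u - c‖ := Real.sqrt_sq (norm_nonneg _)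
    · intro h
      rw [dist_eq_norm] at h
      have h7 : ρ ^ 2 ≤ ‖u - c‖ ^ 2 := pow_le_pow_left₀ hρ.le h 2
      have h6 : t * D ≤ ‖p - u‖ ^ 2 := by
        rw [htD]
        have h9 : 0 ≤ μ * (‖u - c‖ ^ 2 - ρ ^ 2) := mul_nonneg hμ0'.le (by linarith)
        linarith [hiden]
      have hX2 : t ≤ X ^ 2 := by
        have h9 : t * D ≤ X ^ 2 * D := by rw [hXsq]; exact h6
        exact le_of_mul_le_mul_right h9 hprod
      have hXt : Real.sqrt t ≤ X := by
        calc Real.sqrt t ≤ Real.sqrt (X ^ 2) := Real.sqrt_le_sqrt hX2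
        _ = X := Real.sqrt_sq hX0
      have := Real.arsinh_le_arsinh.2 hXt
      linarith
lemma exists_second {Z : Set (EuclideanSpace ℝ (Fin 2))}
    (hloc : ∀ s : Set (EuclideanSpace ℝ (Fin 2)), Bornology.IsBounded s → (Z ∩ s).Finite)
    (hncirc : ∀ (c : EuclideanSpace ℝ (Fin 2)) (ρ : ℝ), {z ∈ Z | dist z c = ρ}.encard ≤ 3)
    {z₁ z₂ : EuclideanSpace ℝ (Fin 2)} (hz₁ : z₁ ∈ Z) (hz₂ : z₂ ∈ Z) (hne : z₁ ≠ z₂)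
    (c : EuclideanSpace ℝ (Fin 2)) (hc12 : dist c z₁ = dist c z₂)
    (hcmin : ∀ z ∈ Z, dist c z₁ ≤ dist c z) :
    ∃ c', c' ≠ c ∧ dist c' z₁ = dist c' z₂ ∧ ∀ z ∈ Z, dist c' z₁ ≤ dist c' z := by
  set ρ := dist c z₁ with hρdef
  have hρ : 0 < ρ := by
    rcases (dist_nonneg : 0 ≤ ρ).lt_or_eq with h | h
    · exact h
    · exfalso
      have h1 : c = z₁ := dist_eq_zero.1 h.symm
      have h2 : c = z₂ := dist_eq_zero.1 (by rw [← hc12]; exact h.symm)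
      exact hne (h1.symm.trans h2)
  set w := z₂ - z₁ with hw
  have hwne : w ≠ 0 := sub_ne_zero.2 (Ne.symm hne)
  set d : EuclideanSpace ℝ (Fin 2) := (WithLp.equiv 2 (Fin 2 → ℝ)).symm ![-(w 1), w 0] with hd
  have hdw : ⟪d, w⟫ = 0 := by
    simp only [hd, PiLp.inner_apply, Fin.sum_univ_two, WithLp.equiv_symm_apply, WithLp.ofLp_toLp,
      RCLike.inner_apply, starRingEnd_apply, star_trivial, Matrix.cons_val_zero,
      Matrix.cons_val_one, Matrix.head_cons]
    ring
  have hdnorm : ‖d‖ ^ 2 = ‖w‖ ^ 2 := by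
    rw [← real_inner_self_eq_norm_sq, ← real_inner_self_eq_norm_sq]
    simp only [hd, PiLp.inner_apply, Fin.sum_univ_two, WithLp.equiv_symm_apply, WithLp.ofLp_toLp,
      RCLike.inner_apply, starRingEnd_apply, star_trivial, Matrix.cons_val_zero,
      Matrix.cons_val_one, Matrix.head_cons]
    ring
  have hd0 : 0 < ‖d‖ := by
    have hw0 : 0 < ‖w‖ := norm_pos_iff.2 hwne
    nlinarith [norm_nonneg d]
  set S := {z ∈ Z | dist z c = ρ} with hS
  have hz₁S : z₁ ∈ S := ⟨hz₁, by rw [dist_comm]⟩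
  have hz₂S : z₂ ∈ S := ⟨hz₂, by rw [dist_comm, ← hc12]⟩
  have hd12 : ⟪d, z₁ - z₂⟫ = 0 := by
    have hww : z₁ - z₂ = -w := by rw [hw]; abel
    rw [hww, inner_neg_right, hdw, neg_zero]
  obtain ⟨e, he0, hew, heS⟩ : ∃ e : EuclideanSpace ℝ (Fin 2),
      0 < ‖e‖ ∧ ⟪e, w⟫ = 0 ∧ ∀ z ∈ S, 0 ≤ ⟪e, z₁ - z⟫ := by
    by_cases hA : ∀ z ∈ S, 0 ≤ ⟪d, z₁ - z⟫
    · exact ⟨d, hd0, hdw, hA⟩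
    by_cases hB : ∀ z ∈ S, 0 ≤ ⟪-d, z₁ - z⟫
    · exact ⟨-d, by rwa [norm_neg], by rw [inner_neg_left, hdw, neg_zero], hB⟩
    exfalso
    push_neg at hA hB
    obtain ⟨z₃, hz₃S, hz₃⟩ := hA
    obtain ⟨z₄, hz₄S, hz₄'⟩ := hB
    have hz₄ : 0 < ⟪d, z₁ - z₄⟫ := by rw [inner_neg_left] at hz₄'; linarith
    have h31 : z₃ ≠ z₁ := fun h => by rw [h, sub_self, inner_zero_right] at hz₃; exact lt_irrefl 0 hz₃
    have h32 : z₃ ≠ z₂ := fun h => by rw [h, hd12] at hz₃; exact lt_irrefl 0 hz₃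
    have h41 : z₄ ≠ z₁ := fun h => by rw [h, sub_self, inner_zero_right] at hz₄; exact lt_irrefl 0 hz₄
    have h42 : z₄ ≠ z₂ := fun h => by rw [h, hd12] at hz₄; exact lt_irrefl 0 hz₄
    have h34 : z₃ ≠ z₄ := fun h => by rw [h] at hz₃; linarith
    have hsub : ({z₁, z₂, z₃, z₄} : Set (EuclideanSpace ℝ (Fin 2))) ⊆ S := by
      intro x hx
      simp only [Set.mem_insert_iff, Set.mem_singleton_iff] at hx
      rcases hx with rfl | rfl | rfl | rfl
      · exact hz₁S
      · exact hz₂S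
      · exact hz₃S
      · exact hz₄S
    have h4 : ({z₁, z₂, z₃, z₄} : Set (EuclideanSpace ℝ (Fin 2))).encard = 4 := by
      rw [Set.encard_insert_of_notMem (by simp [hne, Ne.symm h31, Ne.symm h41]),
          Set.encard_insert_of_notMem (by simp [Ne.symm h32, Ne.symm h42]),
          Set.encard_pair h34]
      rfl
    have hle := Set.encard_le_encard hsub
    rw [h4] at hle
    have h3 := hncirc c ρ
    rw [← hS] at h3
    have : (4:ℕ∞) ≤ 3 := hle.trans h3
    norm_num at this
  have hTfin : {z ∈ Z | dist z c ≤ ρ + 1 ∧ dist z c ≠ ρ}.Finite := by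
    apply (hloc (Metric.closedBall c (ρ + 1)) Metric.isBounded_closedBall).subset
    intro z hz
    exact ⟨hz.1, Metric.mem_closedBall.2 hz.2.1⟩
  set T := {z ∈ Z | dist z c ≤ ρ + 1 ∧ dist z c ≠ ρ} with hT
  obtain ⟨δ, hδ0, hδ1, hδ⟩ : ∃ δ : ℝ, 0 < δ ∧ δ ≤ 1 ∧ ∀ z ∈ T, ρ + δ ≤ dist z c := by
    rcases T.eq_empty_or_nonempty with h | h
    · exact ⟨1, one_pos, le_refl 1, fun z hz => absurd (h ▸ hz) (Set.notMem_empty z)⟩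
    · obtain ⟨z₀, hz₀⟩ := h
      have hne' : hTfin.toFinset.Nonempty := ⟨z₀, hTfin.mem_toFinset.2 hz₀⟩
      have hδ'pos : 0 < hTfin.toFinset.inf' hne' (fun z => dist z c - ρ) := by
        rw [Finset.lt_inf'_iff]
        intro z hzmem
        have hzT : z ∈ T := hTfin.mem_toFinset.1 hzmem
        have hge : ρ ≤ dist z c := by rw [dist_comm]; exact hcmin z hzT.1
        have := lt_of_le_of_ne hge (Ne.symm hzT.2.2)
        linarith
      refine ⟨min (hTfin.toFinset.inf' hne' (fun z => dist z c - ρ)) 1,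
        lt_min hδ'pos one_pos, min_le_right _ _, fun z hz => ?_⟩
      have h1 : hTfin.toFinset.inf' hne' (fun z => dist z c - ρ) ≤ dist z c - ρ :=
        Finset.inf'_le _ (hTfin.mem_toFinset.2 hz)
      have h2 := min_le_left (hTfin.toFinset.inf' hne' (fun z => dist z c - ρ)) 1
      linarith
  set η := δ / (2 * ‖e‖) with hη
  have hη0 : 0 < η := div_pos hδ0 (by positivity)
  set c' := c + η • e with hc'
  have hcc' : dist c' c = δ / 2 := by
    rw [hc', dist_eq_norm, add_sub_cancel_left, norm_smul, Real.norm_eq_abs, abs_of_pos hη0, hη]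
    field_simp
  have hc'c : c' ≠ c := by
    intro h
    have h0 : dist c' c = 0 := by rw [h, dist_self]
    rw [hcc'] at h0; linarith
  have hinn : ∀ x : EuclideanSpace ℝ (Fin 2), ⟪c', x⟫ = ⟪c, x⟫ + η * ⟪e, x⟫ := fun x => by
    rw [hc', inner_add_left, real_inner_smul_left]
  have hez : ⟪e, z₁⟫ = ⟪e, z₂⟫ := by
    have h := hew
    rw [hw, inner_sub_right] at h
    linarith
  refine ⟨c', hc'c, ?_, ?_⟩
  · rw [dist_eq_iff_lin]
    have h0 := (dist_eq_iff_lin c z₁ z₂).1 hc12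
    rw [hinn z₁, hinn z₂, hez]
    linarith
  · intro z hz
    by_cases hzρ : dist z c = ρ
    · rw [dist_le_iff_lin]
      have h0 := (dist_le_iff_lin c z₁ z).1 (hcmin z hz)
      have hzS : z ∈ S := ⟨hz, hzρ⟩
      have hge := heS z hzS
      rw [inner_sub_right] at hge
      rw [hinn z₁, hinn z]
      nlinarith [mul_nonneg hη0.le hge]
    · have h1 : dist c' z₁ ≤ δ / 2 + ρ := by
        calc dist c' z₁ ≤ dist c' c + dist c z₁ := dist_triangle _ _ _
        _ = δ / 2 + ρ := by rw [hcc']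
      have h2 : dist z c - δ / 2 ≤ dist c' z := by
        have h3 := dist_triangle z c' c
        rw [hcc'] at h3
        rw [dist_comm z c'] at h3
        linarith
      by_cases hfar : dist z c ≤ ρ + 1
      · have hzT : z ∈ T := ⟨hz, hfar, hzρ⟩
        have := hδ z hzT
        linarith
      · push_neg at hfar
        linarith

set_option maxHeartbeats 1600000 in
theorem stmt6 (Z : Set (EuclideanSpace ℝ (Fin 2)))
    (hZD : ∀ z ∈ Z, ‖z‖ < 1)
    (hloc : ∀ s : Set (EuclideanSpace ℝ (Fin 2)), Bornology.IsBounded s → (Z ∩ s).Finite)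
    (hncol : ¬ ∃ (a d : EuclideanSpace ℝ (Fin 2)), ∀ z ∈ Z, ∃ t : ℝ, z = a + t • d)
    (hncirc : ∀ (c : EuclideanSpace ℝ (Fin 2)) (ρ : ℝ),
      {z ∈ Z | dist z c = ρ}.encard ≤ 3)
    (z₁ z₂ : EuclideanSpace ℝ (Fin 2)) (hz₁ : z₁ ∈ Z) (hz₂ : z₂ ∈ Z) (hne : z₁ ≠ z₂)
    -- the Euclidean cells touch
    (htouch : (cellE Z z₁ ∩ cellE Z z₂).Nonempty)
    -- every empty disk witnessing this touching is contained in the closed unit disk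
    (hwitness : ∀ (c : EuclideanSpace ℝ (Fin 2)) (ρ : ℝ), 0 < ρ →
      dist z₁ c = ρ → dist z₂ c = ρ → (∀ z ∈ Z, ¬ dist z c < ρ) →
      Metric.closedBall c ρ ⊆ Metric.closedBall (0 : EuclideanSpace ℝ (Fin 2)) 1) :
    (cellH Z z₁ ∩ cellH Z z₂).Nonempty := by
  classical
  obtain ⟨c₀, hc₀1, hc₀2⟩ := htouch
  have hmin₀ : ∀ z ∈ Z, dist c₀ z₁ ≤ dist c₀ z := (mem_cellE_iff hz₁).1 hc₀1
  have hmin₀' : ∀ z ∈ Z, dist c₀ z₂ ≤ dist c₀ z := (mem_cellE_iff hz₂).1 hc₀2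
  have heq₀ : dist c₀ z₁ = dist c₀ z₂ := le_antisymm (hmin₀ z₂ hz₂) (hmin₀' z₁ hz₁)
  have hρpos : ∀ c : EuclideanSpace ℝ (Fin 2), dist c z₁ = dist c z₂ → 0 < dist c z₁ := by
    intro c h
    rcases (dist_nonneg : 0 ≤ dist c z₁).lt_or_eq with h' | h'
    · exact h'
    · exfalso
      have h1 : c = z₁ := dist_eq_zero.1 h'.symm
      have h2 : c = z₂ := dist_eq_zero.1 (by rw [← h]; exact h'.symm)
      exact hne (h1.symm.trans h2)
  have hle1 : ∀ c : EuclideanSpace ℝ (Fin 2), dist c z₁ = dist c z₂ →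
      (∀ z ∈ Z, dist c z₁ ≤ dist c z) → ‖c‖ + dist c z₁ ≤ 1 := by
    intro c h12 hmin
    have hρ : 0 < dist c z₁ := hρpos c h12
    have hsub := hwitness c (dist c z₁) hρ (dist_comm z₁ c) (by rw [dist_comm]; exact h12.symm)
      (fun z hz => not_lt.2 (by rw [dist_comm z c]; exact hmin z hz))
    obtain ⟨x, hx1, hx2⟩ : ∃ x : EuclideanSpace ℝ (Fin 2),
        dist x c ≤ dist c z₁ ∧ ‖c‖ + dist c z₁ ≤ ‖x‖ := by
      by_cases hc : c = (0 : EuclideanSpace ℝ (Fin 2))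
      · subst hc
        refine ⟨(dist (0 : EuclideanSpace ℝ (Fin 2)) z₁) • EuclideanSpace.single 0 (1:ℝ), ?_, ?_⟩
        · rw [dist_eq_norm, sub_zero, norm_smul, Real.norm_eq_abs, abs_of_pos hρ,
            EuclideanSpace.norm_single, norm_one, mul_one]
        · rw [norm_zero, zero_add, norm_smul, Real.norm_eq_abs, abs_of_pos hρ,
            EuclideanSpace.norm_single, norm_one, mul_one]
      · have hc0 : 0 < ‖c‖ := norm_pos_iff.2 hc
        refine ⟨(1 + dist c z₁ / ‖c‖) • c, ?_, ?_⟩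
        · have hxc : (1 + dist c z₁ / ‖c‖) • c - c = (dist c z₁ / ‖c‖) • c := by
            rw [add_smul, one_smul, add_sub_cancel_left]
          rw [dist_eq_norm, hxc, norm_smul, Real.norm_eq_abs,
            abs_of_pos (by positivity), div_mul_cancel₀ _ hc0.ne']
        · rw [norm_smul, Real.norm_eq_abs, abs_of_pos (by positivity), add_mul, one_mul,
            div_mul_cancel₀ _ hc0.ne']
    have hx3 := hsub (Metric.mem_closedBall.2 hx1)
    rw [Metric.mem_closedBall, dist_zero_right] at hx3
    linarith
  have hkey : ∃ c : EuclideanSpace ℝ (Fin 2), dist c z₁ = dist c z₂ ∧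
      (∀ z ∈ Z, dist c z₁ ≤ dist c z) ∧ ‖c‖ + dist c z₁ < 1 := by
    by_cases hstrict : ‖c₀‖ + dist c₀ z₁ < 1
    · exact ⟨c₀, heq₀, hmin₀, hstrict⟩
    have h0 : ‖c₀‖ + dist c₀ z₁ = 1 := le_antisymm (hle1 c₀ heq₀ hmin₀) (not_lt.1 hstrict)
    obtain ⟨c₁, hc₁ne, heq₁, hmin₁⟩ := exists_second hloc hncirc hz₁ hz₂ hne c₀ heq₀ hmin₀
    set m : EuclideanSpace ℝ (Fin 2) := (2:ℝ)⁻¹ • (c₀ + c₁) with hm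
    have hminn : ∀ x : EuclideanSpace ℝ (Fin 2), ⟪m, x⟫ = 2⁻¹ * (⟪c₀, x⟫ + ⟪c₁, x⟫) := fun x => by
      rw [hm, real_inner_smul_left, inner_add_left]
    have heqm : dist m z₁ = dist m z₂ := by
      rw [dist_eq_iff_lin]
      have h1 := (dist_eq_iff_lin c₀ z₁ z₂).1 heq₀
      have h2 := (dist_eq_iff_lin c₁ z₁ z₂).1 heq₁
      rw [hminn z₁, hminn z₂]
      linarith
    have hminm : ∀ z ∈ Z, dist m z₁ ≤ dist m z := by
      intro z hz
      rw [dist_le_iff_lin]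
      have h1 := (dist_le_iff_lin c₀ z₁ z).1 (hmin₀ z hz)
      have h2 := (dist_le_iff_lin c₁ z₁ z).1 (hmin₁ z hz)
      rw [hminn z₁, hminn z]
      linarith
    by_cases hstrictm : ‖m‖ + dist m z₁ < 1
    · exact ⟨m, heqm, hminm, hstrictm⟩
    by_cases hstrict1 : ‖c₁‖ + dist c₁ z₁ < 1
    · exact ⟨c₁, heq₁, hmin₁, hstrict1⟩
    exfalso
    have h1 : ‖c₁‖ + dist c₁ z₁ = 1 := le_antisymm (hle1 c₁ heq₁ hmin₁) (not_lt.1 hstrict1)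
    have hm1 : ‖m‖ + dist m z₁ = 1 := le_antisymm (hle1 m heqm hminm) (not_lt.1 hstrictm)
    -- algebraic contradiction
    have ha0 : ‖c₀‖ = 1 - dist c₀ z₁ := by linarith
    have ha1 : ‖c₁‖ = 1 - dist c₁ z₁ := by linarith
    have ham : ‖m‖ = 1 - dist m z₁ := by linarith
    have e0 : dist c₀ z₁ ^ 2 = ‖c₀‖ ^ 2 - 2 * ⟪c₀, z₁⟫ + ‖z₁‖ ^ 2 := by
      rw [dist_eq_norm]; exact norm_sub_sq_real _ _
    have e1 : dist c₁ z₁ ^ 2 = ‖c₁‖ ^ 2 - 2 * ⟪c₁, z₁⟫ + ‖z₁‖ ^ 2 := by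
      rw [dist_eq_norm]; exact norm_sub_sq_real _ _
    have em : dist m z₁ ^ 2 = ‖m‖ ^ 2 - 2 * ⟪m, z₁⟫ + ‖z₁‖ ^ 2 := by
      rw [dist_eq_norm]; exact norm_sub_sq_real _ _
    have hq0 : 2 * dist c₀ z₁ = 1 - 2 * ⟪c₀, z₁⟫ + ‖z₁‖ ^ 2 := by
      linear_combination e0 + (‖c₀‖ + 1 - dist c₀ z₁) * ha0
    have hq1 : 2 * dist c₁ z₁ = 1 - 2 * ⟪c₁, z₁⟫ + ‖z₁‖ ^ 2 := by
      linear_combination e1 + (‖c₁‖ + 1 - dist c₁ z₁) * ha1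
    have hqm : 2 * dist m z₁ = 1 - 2 * ⟪m, z₁⟫ + ‖z₁‖ ^ 2 := by
      linear_combination em + (‖m‖ + 1 - dist m z₁) * ham
    have hmz : ⟪m, z₁⟫ = 2⁻¹ * (⟪c₀, z₁⟫ + ⟪c₁, z₁⟫) := hminn z₁
    have hm2 : ‖m‖ ^ 2 = (‖c₀‖ ^ 2 + 2 * ⟪c₀, c₁⟫ + ‖c₁‖ ^ 2) / 4 := by
      rw [← real_inner_self_eq_norm_sq, ← real_inner_self_eq_norm_sq,
        ← real_inner_self_eq_norm_sq, hminn m, real_inner_comm m c₀, real_inner_comm m c₁,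
        hminn c₀, hminn c₁, real_inner_comm c₁ c₀]
      ring
    have hrm : dist m z₁ = (dist c₀ z₁ + dist c₁ z₁) / 2 := by
      rw [hmz] at hqm; linarith
    have hd2 : ‖c₁ - c₀‖ ^ 2 = ‖c₁‖ ^ 2 - 2 * ⟪c₀, c₁⟫ + ‖c₀‖ ^ 2 := by
      rw [norm_sub_sq_real, real_inner_comm c₁ c₀]
    have hexp1 : 4 * dist m z₁ ^ 2 = dist c₀ z₁ ^ 2 + 2 * (dist c₀ z₁ * dist c₁ z₁)
        + dist c₁ z₁ ^ 2 := by rw [hrm]; ring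
    have hem4 : 4 * dist m z₁ ^ 2 = (‖c₀‖ ^ 2 + 2 * ⟪c₀, c₁⟫ + ‖c₁‖ ^ 2)
        - 4 * (⟪c₀, z₁⟫ + ⟪c₁, z₁⟫) + 4 * ‖z₁‖ ^ 2 := by
      rw [hmz] at em
      linear_combination 4 * em + 4 * hm2
    have hsq : ‖c₁ - c₀‖ ^ 2 = (dist c₀ z₁ - dist c₁ z₁) ^ 2 := by
      have hexp2 : (dist c₀ z₁ - dist c₁ z₁) ^ 2 = dist c₀ z₁ ^ 2
          - 2 * (dist c₀ z₁ * dist c₁ z₁) + dist c₁ z₁ ^ 2 := by ring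
      linarith [hexp1, hem4, e0, e1, hd2, hexp2]
    have hi : ⟪c₁, z₁⟫ - ⟪c₀, z₁⟫ = dist c₀ z₁ - dist c₁ z₁ := by linarith
    have hCS := real_inner_mul_inner_self_le (c₁ - c₀) z₁
    rw [inner_sub_left, real_inner_self_eq_norm_sq, real_inner_self_eq_norm_sq] at hCS
    have hz1D : ‖z₁‖ < 1 := hZD z₁ hz₁
    have hzz : ‖z₁‖ ^ 2 < 1 := by nlinarith [norm_nonneg z₁]
    have hdpos : 0 < ‖c₁ - c₀‖ := norm_pos_iff.2 (sub_ne_zero.2 hc₁ne)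
    have hdsq : 0 < ‖c₁ - c₀‖ ^ 2 := by positivity
    have hdd : ‖c₁ - c₀‖ ^ 2 = (⟪c₁, z₁⟫ - ⟪c₀, z₁⟫) * (⟪c₁, z₁⟫ - ⟪c₀, z₁⟫) := by
      rw [hsq, hi]; ring
    rw [← hdd] at hCS
    have hlast := mul_lt_mul_of_pos_left hzz hdsq
    rw [mul_one] at hlast
    exact absurd hCS (not_le.2 hlast)
  obtain ⟨c, heqc, hminc, hltc⟩ := hkey
  have hρ : 0 < dist c z₁ := hρpos c heqc
  obtain ⟨p, r, hp1, hiff⟩ := ball_corr c (dist c z₁) hρ hltc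
  have h1 : distH p z₁ = r :=
    le_antisymm ((hiff z₁ (hZD z₁ hz₁)).1.2 (le_of_eq (dist_comm z₁ c)))
      ((hiff z₁ (hZD z₁ hz₁)).2.2 (ge_of_eq (dist_comm z₁ c)))
  have h2 : distH p z₂ = r := by
    have hd2 : dist z₂ c = dist c z₁ := by rw [dist_comm]; exact heqc.symm
    exact le_antisymm ((hiff z₂ (hZD z₂ hz₂)).1.2 (le_of_eq hd2))
      ((hiff z₂ (hZD z₂ hz₂)).2.2 (ge_of_eq hd2))
  have hler : ∀ z ∈ Z, r ≤ distH p z := fun z hz =>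
    (hiff z (hZD z hz)).2.2 (by rw [dist_comm z c]; exact hminc z hz)
  refine ⟨p, ?_, ?_⟩
  · exact (mem_cellH_iff hz₁).2 ⟨hp1, fun z hz => by rw [h1]; exact hler z hz⟩
  · exact (mem_cellH_iff hz₂).2 ⟨hp1, fun z hz => by rw [h2]; exact hler z hz⟩
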